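/- The function E(α) = (α(1−α)/(1−2α))·log₂(α⁻¹ − 1), extended continuously at α = 1/2 by the value (1/2)·log₂ e, is concave on the open interval (0,1). -/

import Mathlib

open Real

noncomputable def auxFn (t α : ℝ) : ℝ := α * (1 - α) / (α + t * (1 - 2 * α))

lemma auxFn_denom_pos {t α : ℝ} (ht0 : 0 ≤ t) (ht1 : t ≤ 1)
    (hα : α ∈ Set.Ioo (0 : ℝ) 1) : 0 < α + t * (1 - 2 * α) := by
  obtain ⟨h0, h1⟩ := hα
  have key : α + t * (1 - 2 * α) = (1 - t) * α + t * (1 - α) := by ring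
  rcases eq_or_lt_of_le ht1 with h | h
  · subst h; nlinarith
  · nlinarith [mul_pos (by linarith : (0:ℝ) < 1 - t) h0,
      mul_nonneg ht0 (by linarith : (0:ℝ) ≤ 1 - α)]

lemma auxFn_concave {t x y a b : ℝ} (ht0 : 0 ≤ t) (ht1 : t ≤ 1)
    (hx : x ∈ Set.Ioo (0 : ℝ) 1) (hy : y ∈ Set.Ioo (0 : ℝ) 1)
    (ha : 0 ≤ a) (hb : 0 ≤ b) (hab : a + b = 1) :
    a * auxFn t x + b * auxFn t y ≤ auxFn t (a * x + b * y) := by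
  have hz : a * x + b * y ∈ Set.Ioo (0 : ℝ) 1 := by
    have := convex_Ioo (0:ℝ) 1 hx hy ha hb hab
    simpa using this
  have hqx := auxFn_denom_pos ht0 ht1 hx
  have hqy := auxFn_denom_pos ht0 ht1 hy
  have hqz := auxFn_denom_pos ht0 ht1 hz
  have hb' : b = 1 - a := by linarith
  subst hb'
  have key : auxFn t (a * x + (1 - a) * y) - (a * auxFn t x + (1 - a) * auxFn t y)
      = (a * (1 - a) * (x - y) ^ 2 * (t * (1 - t))) /
        ((x + t * (1 - 2 * x)) * (y + t * (1 - 2 * y)) *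
          ((a * x + (1 - a) * y) + t * (1 - 2 * (a * x + (1 - a) * y)))) := by
    unfold auxFn
    rw [mul_div_assoc', mul_div_assoc', div_add_div _ _ hqx.ne' hqy.ne', div_sub_div _ _ hqz.ne' (by positivity), div_eq_div_iff (by positivity) (by positivity)]
    ring
  have hnum : 0 ≤ a * (1 - a) * (x - y) ^ 2 * (t * (1 - t)) := by
    have := mul_nonneg ht0 (by linarith : (0:ℝ) ≤ 1 - t)
    have := sq_nonneg (x - y)
    have := mul_nonneg ha hb
    positivity
  have hden : 0 < (x + t * (1 - 2 * x)) * (y + t * (1 - 2 * y)) *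
      ((a * x + (1 - a) * y) + t * (1 - 2 * (a * x + (1 - a) * y))) := by positivity
  nlinarith [div_nonneg hnum hden.le]

lemma auxFn_integrable {α : ℝ} (hα : α ∈ Set.Ioo (0 : ℝ) 1) :
    IntervalIntegrable (fun t => auxFn t α) MeasureTheory.volume 0 1 := by
  apply ContinuousOn.intervalIntegrable
  apply ContinuousOn.div continuousOn_const
  · exact Continuous.continuousOn (by continuity)
  · intro t ht
    rw [Set.uIcc_of_le (by norm_num : (0:ℝ) ≤ 1)] at ht
    exact (auxFn_denom_pos ht.1 ht.2 hα).ne'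

lemma f_eq_integral {α : ℝ} (hα : α ∈ Set.Ioo (0 : ℝ) 1) :
    (if α = 1 / 2 then (1 / 2) * logb 2 (exp 1)
      else (α * (1 - α) / (1 - 2 * α)) * logb 2 (α⁻¹ - 1))
    = (Real.log 2)⁻¹ * ∫ t in (0:ℝ)..1, auxFn t α := by
  obtain ⟨h0, h1⟩ := hα
  split_ifs with h
  · subst h
    have : (fun t : ℝ => auxFn t (1/2)) = fun _ => (1/2 : ℝ) := by
      funext t; unfold auxFn; norm_num
    rw [this, intervalIntegral.integral_const]
    simp [Real.logb, Real.log_exp]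
    ring
  · have hd : (1 - 2 * α) ≠ 0 := by
      intro hc; apply h; linarith
    have h1α : 0 < 1 - α := by linarith
    have hint : (∫ t in (0:ℝ)..1, auxFn t α)
        = α * (1 - α) * ((1 - 2 * α)⁻¹ * ∫ u in α..(1 - α), u⁻¹) := by
      have e1 : (fun t : ℝ => auxFn t α)
          = fun t : ℝ => α * (1 - α) * (fun u : ℝ => u⁻¹) ((1 - 2 * α) * t + α) := by
        funext t; unfold auxFn
        rw [div_eq_mul_inv]; ring_nf
      rw [e1, intervalIntegral.integral_const_mul,
        intervalIntegral.integral_comp_mul_add (fun u : ℝ => u⁻¹) hd α,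
        show (1 - 2 * α) * 0 + α = α from by ring,
        show (1 - 2 * α) * 1 + α = 1 - α from by ring, smul_eq_mul]
    rw [hint]
    have hlog : (∫ u in α..(1 - α), u⁻¹) = Real.log ((1 - α) / α) := by
      apply integral_inv
      exact Set.notMem_uIcc_of_lt h0 h1α
    rw [hlog, Real.log_div h1α.ne' h0.ne']
    have hα' : α⁻¹ - 1 = (1 - α) / α := by field_simp
    rw [hα', Real.logb, Real.log_div h1α.ne' h0.ne']
    ring

/-- The function `E(α) = (α(1−α)/(1−2α))·log₂(α⁻¹ − 1)`, extended continuously at `α = 1/2`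
by the value `(1/2)·log₂ e`, is concave on `(0,1)`. -/
theorem expected_throughput_concave :
    ConcaveOn ℝ (Set.Ioo (0 : ℝ) 1)
      (fun α => if α = 1 / 2 then (1 / 2) * logb 2 (exp 1)
        else (α * (1 - α) / (1 - 2 * α)) * logb 2 (α⁻¹ - 1)) := by
  refine ⟨convex_Ioo 0 1, fun x hx y hy a b ha hb hab => ?_⟩
  have hz : a • x + b • y ∈ Set.Ioo (0 : ℝ) 1 := (convex_Ioo 0 1) hx hy ha hb hab
  simp only [smul_eq_mul] at hz ⊢
  rw [f_eq_integral hx, f_eq_integral hy, f_eq_integral hz]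
  have hIneq : a * (∫ t in (0:ℝ)..1, auxFn t x) + b * (∫ t in (0:ℝ)..1, auxFn t y)
      ≤ ∫ t in (0:ℝ)..1, auxFn t (a * x + b * y) := by
    rw [← intervalIntegral.integral_const_mul, ← intervalIntegral.integral_const_mul,
      ← intervalIntegral.integral_add ((auxFn_integrable hx).const_mul a)
        ((auxFn_integrable hy).const_mul b)]
    apply intervalIntegral.integral_mono_on (by norm_num)
      (((auxFn_integrable hx).const_mul a).add ((auxFn_integrable hy).const_mul b))
      (auxFn_integrable hz)
    intro t ht
    exact auxFn_concave ht.1 ht.2 hx hy ha hb hab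
  have hc : 0 ≤ (Real.log 2)⁻¹ := by
    have := Real.log_pos (by norm_num : (1:ℝ) < 2)
    positivity
  calc a * ((Real.log 2)⁻¹ * ∫ t in (0:ℝ)..1, auxFn t x)
        + b * ((Real.log 2)⁻¹ * ∫ t in (0:ℝ)..1, auxFn t y)
      = (Real.log 2)⁻¹ * (a * (∫ t in (0:ℝ)..1, auxFn t x)
          + b * (∫ t in (0:ℝ)..1, auxFn t y)) := by ring
    _ ≤ (Real.log 2)⁻¹ * ∫ t in (0:ℝ)..1, auxFn t (a * x + b * y) :=
        mul_le_mul_of_nonneg_left hIneq hc
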